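/- Let W = (ℤ/2)ⁱ ⋊ Σᵢ act on (ℂ*)ⁱ by first permuting the coordinates (via Σᵢ) and then applying complex conjugation in each coordinate where the corresponding ℤ/2-entry is nontrivial, and form the semidirect product G = (ℂ*)ⁱ ⋊ W. Then every element of G whose W-component is nontrivial has a non-discrete conjugacy class, and hence every discrete normal subgroup of G is contained in (ℂ*)ⁱ × {1}. -/

import Mathlib

open Complex

/-- Complex conjugation as an automorphism of `ℂˣ`. -/
noncomputable def conjUnits : ℂˣ ≃* ℂˣ := Units.mapEquiv (starMulAut : ℂ ≃* ℂ)

lemma conjUnits_sq : conjUnits * conjUnits = 1 := by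
  ext u
  simp [conjUnits, Units.mapEquiv]

/-- The action of `ℤ/2` on `ℂˣ` with the nontrivial element acting by conjugation. -/
noncomputable def conjHom : Multiplicative (ZMod 2) →* MulAut ℂˣ :=
  MonoidHom.mk' (fun g => if Multiplicative.toAdd g = 0 then 1 else conjUnits)
    (by
      intro a b
      have hcases : ∀ x : ZMod 2, x = 0 ∨ x = 1 := by decide
      rcases hcases (Multiplicative.toAdd a) with ha | ha <;>
        rcases hcases (Multiplicative.toAdd b) with hb | hb <;>
          simp [toAdd_mul, ha, hb, conjUnits_sq, (by decide : (1 + 1 : ZMod 2) = 0),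
            (by decide : (1 : ZMod 2) ≠ 0)])

variable (i : ℕ)

/-- The permutation action of `Σᵢ` on `(ℤ/2)ⁱ`. -/
noncomputable def permHom : Equiv.Perm (Fin i) →* MulAut (Fin i → Multiplicative (ZMod 2)) :=
  MonoidHom.mk' (fun σ => MulEquiv.arrowCongr σ (MulEquiv.refl (Multiplicative (ZMod 2))))
    (by
      intro σ τ
      ext f j
      simp [MulEquiv.arrowCongr, Equiv.Perm.mul_def, Equiv.symm_trans_apply])

/-- The group `W = (ℤ/2)ⁱ ⋊ Σᵢ`. -/
noncomputable abbrev Wgrp :=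
  SemidirectProduct (Fin i → Multiplicative (ZMod 2)) (Equiv.Perm (Fin i)) (permHom i)

variable {i}

/-- The action of `W` on `(ℂ*)ⁱ`: first permute the coordinates, then conjugate each
coordinate whose `ℤ/2`-entry is nontrivial. -/
noncomputable def actFun (w : Wgrp i) (z : Fin i → ℂˣ) : Fin i → ℂˣ :=
  fun j => conjHom (w.left j) (z (w.right⁻¹ j))

lemma actFun_comp (w w' : Wgrp i) (z : Fin i → ℂˣ) :
    actFun w (actFun w' z) = actFun (w * w') z := by
  funext j
  simp [actFun, SemidirectProduct.mul_left, SemidirectProduct.mul_right, permHom,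
    MulEquiv.arrowCongr, map_mul, MulAut.mul_apply, mul_inv_rev, Equiv.Perm.mul_apply,
    Equiv.Perm.inv_def]

lemma actFun_one (z : Fin i → ℂˣ) : actFun (1 : Wgrp i) z = z := by
  funext j
  simp [actFun]

/-- The action of `w ∈ W` on `(ℂ*)ⁱ` as a group automorphism. -/
noncomputable def actAut (w : Wgrp i) : MulAut (Fin i → ℂˣ) where
  toFun := actFun w
  invFun := actFun w⁻¹
  left_inv := fun z => by rw [actFun_comp, inv_mul_cancel, actFun_one]
  right_inv := fun z => by rw [actFun_comp, mul_inv_cancel, actFun_one]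
  map_mul' := fun a b => by
    funext j
    simp [actFun, Pi.mul_apply, map_mul]

variable (i)

/-- The action of `W = (ℤ/2)ⁱ ⋊ Σᵢ` on `(ℂ*)ⁱ` as a homomorphism `W →* Aut((ℂ*)ⁱ)`. -/
noncomputable def psi : Wgrp i →* MulAut (Fin i → ℂˣ) :=
  MonoidHom.mk' actAut
    (fun w w' => MulEquiv.ext fun z => (actFun_comp w w' z).symm)

/-- The group `G = (ℂ*)ⁱ ⋊ W`. -/
noncomputable abbrev Ggrp := SemidirectProduct (Fin i → ℂˣ) (Wgrp i) (psi i)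

instance : TopologicalSpace (Wgrp i) := ⊥

/-- The topology on `G`: the product of the standard topology on `(ℂ*)ⁱ` and the discrete
topology on `W`. -/
noncomputable instance : TopologicalSpace (Ggrp i) :=
  TopologicalSpace.induced (fun g : Ggrp i => (g.left, g.right)) inferInstance

/-- The unit circle point `e^{iθ}` as a unit of `ℂ`. -/
noncomputable def uc (θ : ℝ) : ℂˣ :=
  ⟨Complex.exp (θ * I), Complex.exp (-θ * I),
    by rw [← Complex.exp_add]; ring_nf; exact Complex.exp_zero,
    by rw [← Complex.exp_add]; ring_nf; exact Complex.exp_zero⟩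

lemma uc_val (θ : ℝ) : ((uc θ : ℂˣ) : ℂ) = Complex.exp (θ * I) := rfl

lemma uc_zero : uc 0 = 1 := Units.ext (by simp [uc])

lemma uc_mul (a b : ℝ) : uc a * uc b = uc (a + b) := Units.ext (by
  simp only [Units.val_mul, uc_val, ← Complex.exp_add]
  congr 1
  push_cast
  ring)

lemma uc_inv (θ : ℝ) : (uc θ)⁻¹ = uc (-θ) :=
  inv_eq_of_mul_eq_one_right (by rw [uc_mul]; simp [uc_zero])

lemma conjUnits_val (u : ℂˣ) : ((conjUnits u : ℂˣ) : ℂ) = (starRingEnd ℂ) (u : ℂ) := rfl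

lemma conjUnits_uc (θ : ℝ) : conjUnits (uc θ) = uc (-θ) := Units.ext (by
  rw [conjUnits_val, uc_val, uc_val, ← Complex.exp_conj]
  congr 1
  push_cast
  simp [Complex.conj_I]
  try ring)

lemma continuous_uc : Continuous uc := by
  rw [Units.continuous_iff]
  constructor
  · exact Complex.continuous_exp.comp (by continuity)
  · have : (fun θ : ℝ => (((uc θ)⁻¹ : ℂˣ) : ℂ)) = fun θ : ℝ => Complex.exp ((-θ : ℝ) * I) := by
      funext θ; rw [uc_inv, uc_val]
    show Continuous fun θ : ℝ => (((uc θ)⁻¹ : ℂˣ) : ℂ)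
    rw [this]
    exact Complex.continuous_exp.comp (by continuity)

lemma uc_ne_one {θ : ℝ} (h0 : 0 < θ) (hπ : θ < Real.pi) : uc θ ≠ 1 := by
  intro h
  have him : (Complex.exp (θ * I)).im = (1 : ℂ).im := by
    rw [← uc_val, h]; rfl
  rw [Complex.exp_ofReal_mul_I_im, Complex.one_im] at him
  exact absurd him (ne_of_gt (Real.sin_pos_of_pos_of_lt_pi h0 hπ))

lemma continuous_conjUnits : Continuous (conjUnits : ℂˣ → ℂˣ) := by
  rw [Units.continuous_iff]
  constructor
  · exact continuous_star.comp Units.continuous_val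
  · have : (fun u : ℂˣ => (((conjUnits u)⁻¹ : ℂˣ) : ℂ))
        = fun u : ℂˣ => (starRingEnd ℂ) ((u⁻¹ : ℂˣ) : ℂ) := by
      funext u; rw [← map_inv conjUnits u, conjUnits_val]
    show Continuous fun u : ℂˣ => (((conjUnits u)⁻¹ : ℂˣ) : ℂ)
    rw [this]
    exact continuous_star.comp Units.continuous_coe_inv

lemma continuous_conjHom (ε : Multiplicative (ZMod 2)) :
    Continuous (conjHom ε : ℂˣ → ℂˣ) := by
  by_cases h : Multiplicative.toAdd ε = 0
  · have : (⇑(conjHom ε) : ℂˣ → ℂˣ) = id := funext fun x => by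
      simp [conjHom, toAdd_eq_zero.mp h]
    rw [this]; exact continuous_id
  · have : (⇑(conjHom ε) : ℂˣ → ℂˣ) = ⇑conjUnits := funext fun x => by
      simp only [conjHom, MonoidHom.mk'_apply, if_neg h]
    rw [this]; exact continuous_conjUnits

/-- in `G = (ℂ*)ⁱ ⋊ ((ℤ/2)ⁱ ⋊ Σᵢ)`, every element whose `W`-component is
nontrivial has a non-discrete conjugacy class, and hence every discrete normal subgroup of
`G` is contained in `(ℂ*)ⁱ × {1}`. -/
theorem stmt_2 (i : ℕ) :
    (∀ g : Ggrp i, g.right ≠ 1 →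
      ¬ DiscreteTopology {h : Ggrp i // IsConj g h}) ∧
    (∀ N : Subgroup (Ggrp i), N.Normal → DiscreteTopology N →
      ∀ g ∈ N, g.right = 1) := by
  have key : ∀ g : Ggrp i, g.right ≠ 1 →
      ¬ DiscreteTopology {h : Ggrp i // IsConj g h} := by
    intro g hg hd
    -- choose a coordinate `j` and a multiplier `m` witnessing the moving conjugates
    have hex : ∃ (j : Fin i) (m : ℝ), 0 < m ∧ m ≤ 2 ∧ ∀ θ : ℝ,
        (if j = j then uc θ else 1) * g.left j *
          conjHom (g.right.left j)
            ((if g.right.right⁻¹ j = j then uc θ else (1 : ℂˣ))⁻¹)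
          = uc (m * θ) * g.left j := by
      by_cases hσ : g.right.right = 1
      · -- permutation trivial, some sign nontrivial
        have hl : g.right.left ≠ 1 := by
          intro h
          exact hg (SemidirectProduct.ext h hσ)
        have : ∃ j, g.right.left j ≠ 1 := by
          by_contra h
          push_neg at h
          exact hl (funext h)
        obtain ⟨j, hj⟩ := this
        have hjj : g.right.right⁻¹ j = j := by rw [hσ]; rfl
        refine ⟨j, 2, by norm_num, le_refl _, fun θ => ?_⟩
        have hne : Multiplicative.toAdd (g.right.left j) ≠ 0 := fun h =>
          hj (toAdd_eq_zero.mp h)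
        rw [if_pos rfl, if_pos hjj, uc_inv]
        have hch : conjHom (g.right.left j) (uc (-θ)) = uc θ := by
          simp only [conjHom, MonoidHom.mk'_apply, if_neg hne, conjUnits_uc, neg_neg]
        rw [hch, mul_assoc, mul_comm (g.left j) (uc θ), ← mul_assoc, uc_mul,
          show θ + θ = 2 * θ by ring]
      · -- permutation nontrivial
        have : ∃ j, g.right.right⁻¹ j ≠ j := by
          by_contra h
          push_neg at h
          apply hσ
          have : g.right.right⁻¹ = 1 := Equiv.ext h
          rw [← inv_inv g.right.right, this]; rfl
        obtain ⟨j, hj⟩ := this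
        refine ⟨j, 1, by norm_num, by norm_num, fun θ => ?_⟩
        rw [if_pos rfl, if_neg hj, inv_one, map_one, mul_one, one_mul]
    obtain ⟨j, m, hm0, hm2, hj⟩ := hex
    set z : ℝ → Fin i → ℂˣ := fun θ k => if k = j then uc θ else 1 with hzdef
    set cc : ℝ → Ggrp i := fun θ => (⟨z θ, 1⟩ : Ggrp i) * g * (⟨z θ, 1⟩ : Ggrp i)⁻¹
      with hccdef
    have hleft : ∀ θ k, (cc θ).left k =
        z θ k * g.left k *
          conjHom (g.right.left k) ((z θ (g.right.right⁻¹ k))⁻¹) := by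
      intro θ k
      rw [hccdef]; dsimp only
      rw [SemidirectProduct.mul_left, SemidirectProduct.mul_left, SemidirectProduct.inv_left,
        SemidirectProduct.mul_right]
      simp [hccdef, SemidirectProduct.mul_left, SemidirectProduct.mul_right,
        SemidirectProduct.inv_left, SemidirectProduct.inv_right, psi, actAut, actFun,
        Pi.mul_apply, Pi.inv_apply, SemidirectProduct.left_inl, SemidirectProduct.right_inl]
    have hright : ∀ θ, (cc θ).right = g.right := by
      intro θ
      simp [hccdef, SemidirectProduct.mul_right, SemidirectProduct.inv_right]
    have hjval : ∀ θ, (cc θ).left j = uc (m * θ) * g.left j := by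
      intro θ
      rw [hleft θ j]
      have := hj θ
      simpa [hzdef] using this
    have hz0 : z 0 = 1 := by
      funext k
      simp [hzdef, uc_zero]
    have hcc0 : cc 0 = g := by
      have h1 : ((⟨z 0, 1⟩ : Ggrp i)) = 1 := by
        rw [hz0]; rfl
      show (⟨z 0, 1⟩ : Ggrp i) * g * (⟨z 0, 1⟩ : Ggrp i)⁻¹ = g
      rw [h1, one_mul, inv_one, mul_one]
    have hzc : ∀ k, Continuous fun θ : ℝ => z θ k := by
      intro k
      by_cases h : k = j <;> simp only [hzdef, h, if_pos, if_neg, if_true, if_false]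
      · exact continuous_uc
      · exact continuous_const
    have hcont : Continuous cc := by
      refine continuous_induced_rng.mpr ?_
      refine Continuous.prodMk ?_ ?_
      · have : (fun θ : ℝ => (cc θ).left) = fun θ : ℝ => fun k =>
            z θ k * g.left k *
              conjHom (g.right.left k) ((z θ (g.right.right⁻¹ k))⁻¹) := by
          funext θ k; exact hleft θ k
        rw [this]
        refine continuous_pi fun k => ?_
        exact ((hzc k).mul continuous_const).mul
          ((continuous_conjHom _).comp (hzc (g.right.right⁻¹ k)).inv)
      · have : (fun θ : ℝ => (cc θ).right) = fun _ : ℝ => g.right := funext hright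
        rw [this]
        exact continuous_const
    set θs : ℕ → ℝ := fun n => 1 / (n + 1) with hθs
    have hθpos : ∀ n, 0 < θs n := fun n => by positivity
    have hθle : ∀ n, θs n ≤ 1 := fun n => by
      rw [hθs]
      rw [div_le_one (by positivity)]
      exact le_add_of_nonneg_left (Nat.cast_nonneg n)
    have htend : Filter.Tendsto (fun n => cc (θs n)) Filter.atTop (nhds g) := by
      have h0 : Filter.Tendsto θs Filter.atTop (nhds 0) :=
        tendsto_one_div_add_atTop_nhds_zero_nat
      have := (hcont.tendsto 0).comp h0
      rwa [hcc0] at this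
    have hne : ∀ n, cc (θs n) ≠ g := by
      intro n h
      have h1 : (cc (θs n)).left j = g.left j := by rw [h]
      rw [hjval] at h1
      have h2 : uc (m * θs n) = 1 := by
        have := mul_eq_right.mp h1
        exact this
      have h3 : 0 < m * θs n := mul_pos hm0 (hθpos n)
      have h4 : m * θs n < Real.pi := by
        have : m * θs n ≤ 2 * 1 :=
          mul_le_mul hm2 (hθle n) (le_of_lt (hθpos n)) (by norm_num)
        have hπ := Real.pi_gt_three
        linarith
      exact uc_ne_one h3 h4 h2
    have hmem : ∀ θ, IsConj g (cc θ) := fun θ => isConj_iff.2 ⟨⟨z θ, 1⟩, rfl⟩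
    set f : ℕ → {h : Ggrp i // IsConj g h} := fun n => ⟨cc (θs n), hmem _⟩ with hf
    have htend' : Filter.Tendsto f Filter.atTop (nhds ⟨g, IsConj.refl g⟩) := by
      rw [tendsto_subtype_rng]
      exact htend
    rw [nhds_discrete, Filter.tendsto_pure] at htend'
    obtain ⟨n, hn⟩ := htend'.exists
    exact hne n (congrArg Subtype.val hn)
  refine ⟨key, ?_⟩
  intro N hN hNd g hgN
  by_contra hg
  refine key g hg ?_
  have hsub : {h : Ggrp i | IsConj g h} ⊆ (N : Set (Ggrp i)) := by
    intro h hh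
    rw [Set.mem_setOf_eq, isConj_iff] at hh
    obtain ⟨c, rfl⟩ := hh
    exact hN.conj_mem g hgN c
  exact DiscreteTopology.of_subset hNd hsub
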